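/- Rate double robustness bias bound for the AIPW score: let p⋆(H) = P(A = d^a | H) and η⋆(H) = E[Y | H, A = d^a]. For any measurable functions p̂ bounded below by c > 0 and η̂, with either the limit p′ = p⋆ or η′ = η⋆, the expectation of the difference of scores satisfies |E[φ(p̂, η̂) − φ(p′, η′)]| ≤ C · ‖p̂ − p⋆‖_{L²} · ‖η̂ − η⋆‖_{L²} for a constant C depending only on c, where φ(p, η) := 1{A=d^a}/p(H) · Y − (1{A=d^a} − p(H))/p(H) · η(H). -/

import Mathlib

open MeasureTheory

/-- Rate double robustness bias bound for the AIPW score (Lemma C.2): there is a constant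
`C` depending only on the positivity constant `c` such that, whenever either `p′ = p⋆` or
`η′ = η⋆` (a.s.), `|E[φ(p̂,η̂) − φ(p′,η′)]| ≤ C ‖p̂ − p⋆‖_{L²} ‖η̂ − η⋆‖_{L²}`, where
`φ(p,η) = 1{A=dᵃ}/p · Y − (1{A=dᵃ} − p)/p · η`, `p⋆ = P(A=dᵃ|H)` and
`η⋆ = E[Y|H,A=dᵃ]` (represented by `p⋆ · η⋆ = E[1{A=dᵃ}·Y|H]` a.s.). -/
theorem rate_double_robustness_bound (c : ℝ) (hc : 0 < c) :
    ∃ C > (0 : ℝ), ∀ (Ω : Type) (m0 : MeasurableSpace Ω) (P : Measure Ω),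
      IsProbabilityMeasure P →
      ∀ (mH : MeasurableSpace Ω), mH ≤ m0 →
      ∀ (A d Y phat p' ps ηhat η' ηs : Ω → ℝ),
      Measurable A → (∀ ω, A ω = 0 ∨ A ω = 1) →
      Measurable[mH] d → (∀ ω, d ω = 0 ∨ d ω = 1) →
      Integrable Y P →
      Measurable[mH] phat → (∀ ω, c ≤ phat ω ∧ phat ω ≤ 1) →
      Measurable[mH] p' → (∀ ω, c ≤ p' ω ∧ p' ω ≤ 1) →
      ps =ᵐ[P] P[(fun ω => if A ω = d ω then (1 : ℝ) else 0)|mH] →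
      Measurable[mH] ηhat → MemLp ηhat 2 P →
      Measurable[mH] η' → MemLp η' 2 P →
      Measurable[mH] ηs → MemLp ηs 2 P →
      (fun ω => ps ω * ηs ω)
          =ᵐ[P] P[(fun ω => (if A ω = d ω then (1 : ℝ) else 0) * Y ω)|mH] →
      (p' =ᵐ[P] ps ∨ η' =ᵐ[P] ηs) →
      |(∫ ω, ((if A ω = d ω then (1 : ℝ) else 0) / phat ω * Y ω
            - ((if A ω = d ω then (1 : ℝ) else 0) - phat ω) / phat ω * ηhat ω) ∂P)
        - ∫ ω, ((if A ω = d ω then (1 : ℝ) else 0) / p' ω * Y ω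
            - ((if A ω = d ω then (1 : ℝ) else 0) - p' ω) / p' ω * η' ω) ∂P|
        ≤ C * (eLpNorm (phat - ps) 2 P).toReal * (eLpNorm (ηhat - ηs) 2 P).toReal := by
  refine ⟨1/c, by positivity, ?_⟩
  intro Ω m0 P hP mH hm A d Y phat p' ps ηhat η' ηs hA hA01 hd hd01 hY hphat hphatb
    hp' hp'b hps hηhat hηhat2 hη' hη'2 hηs hηs2 hr hcase
  haveI := hP
  haveI : SigmaFinite (P.trim hm) := inferInstance
  set I : Ω → ℝ := fun ω => if A ω = d ω then (1 : ℝ) else 0 with hIdef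
  have hImeasH : Measurable[mH] I := by
    exact Measurable.ite (measurableSet_eq_fun hA hd) measurable_const measurable_const
  have hImeas : Measurable[m0] I := hImeasH.mono hm le_rfl
  have hI : Integrable I P := by
    refine (integrable_const (1:ℝ)).mono' hImeas.aestronglyMeasurable ?_
    refine ae_of_all P fun ω => ?_
    simp only [I, Real.norm_eq_abs]
    split <;> norm_num
  have hIY : Integrable (fun ω => I ω * Y ω) P := by
    refine hY.bdd_mul hImeas.aestronglyMeasurable (c := 1) (ae_of_all P fun ω => ?_)
    simp only [I, Real.norm_eq_abs]; split <;> norm_num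
  set q : Ω → ℝ := P[I|mH] with hqdef
  set r : Ω → ℝ := P[(fun ω => I ω * Y ω)|mH] with hrdef
  have hq_sm : StronglyMeasurable[mH] q := stronglyMeasurable_condExp
  have hq_int : Integrable q P := integrable_condExp
  have hr_int : Integrable r P := integrable_condExp
  have hq0 : 0 ≤ᵐ[P] q := condExp_nonneg (ae_of_all P fun ω => by
    simp only [I]; split <;> norm_num)
  have hq1 : q ≤ᵐ[P] fun _ => (1:ℝ) := by
    have h := condExp_mono (μ := P) (m := mH) hI (integrable_const (1:ℝ))
      (ae_of_all P fun ω => by simp only [I]; split <;> norm_num)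
    rwa [condExp_const hm] at h
  have hrq : r =ᵐ[P] fun ω => q ω * ηs ω := by
    filter_upwards [hr, hps] with ω h1 h2
    rw [← h1, h2]
  have hbd : ∀ (x e pw : ℝ), c ≤ pw → |x| ≤ 1 → ‖e / pw * x‖ ≤ 1 / c * |e| := by
    intro x e pw h1 hx
    have hpw : 0 < pw := lt_of_lt_of_le hc h1
    rw [Real.norm_eq_abs, abs_mul, abs_div, abs_of_pos hpw]
    calc |e| / pw * |x| ≤ |e| / pw * 1 := mul_le_mul_of_nonneg_left hx (by positivity)
      _ = |e| / pw := by ring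
      _ ≤ |e| / c := div_le_div_of_nonneg_left (abs_nonneg _) hc h1
      _ = 1 / c * |e| := by ring
  have key : ∀ (p η : Ω → ℝ), Measurable[mH] p → (∀ ω, c ≤ p ω ∧ p ω ≤ 1) →
      Measurable[mH] η → MemLp η 2 P →
      Integrable (fun ω => 1 / p ω * r ω - η ω / p ω * q ω + η ω) P ∧
      ∫ ω, (I ω / p ω * Y ω - (I ω - p ω) / p ω * η ω) ∂P
        = ∫ ω, (1 / p ω * r ω - η ω / p ω * q ω + η ω) ∂P := by
    intro p η hp hpb hη hη2
    have hp0 : ∀ ω, p ω ≠ 0 := fun ω => ne_of_gt (lt_of_lt_of_le hc (hpb ω).1)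
    have hpm : Measurable[m0] p := hp.mono hm le_rfl
    have hηm : Measurable[m0] η := hη.mono hm le_rfl
    have hη_int : Integrable η P := hη2.integrable (by norm_num)
    have hinvb : ∀ ω, ‖1 / p ω‖ ≤ 1 / c := fun ω => by
      have hpω : 0 < p ω := lt_of_lt_of_le hc (hpb ω).1
      rw [Real.norm_eq_abs, abs_of_pos (by positivity : (0:ℝ) < 1 / p ω)]
      exact one_div_le_one_div_of_le hc (hpb ω).1
    have hA_int : Integrable (fun ω => 1 / p ω * (I ω * Y ω)) P :=
      hIY.bdd_mul ((measurable_const.div hpm).aestronglyMeasurable) (c := 1/c) (ae_of_all P hinvb)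
    have hB_int : Integrable (fun ω => η ω / p ω * I ω) P := by
      refine (hη_int.abs.const_mul (1/c)).mono'
        (((hηm.div hpm).mul hImeas).aestronglyMeasurable) (ae_of_all P fun ω => ?_)
      exact hbd _ _ _ (hpb ω).1 (by simp only [I]; split <;> norm_num)
    have hA_eq : ∫ ω, 1 / p ω * (I ω * Y ω) ∂P = ∫ ω, 1 / p ω * r ω ∂P := by
      have h1 := condExp_mul_of_stronglyMeasurable_left (μ := P)
        ((measurable_const.div hp).stronglyMeasurable :
          StronglyMeasurable[mH] (fun ω => 1 / p ω)) hA_int hIY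
      calc ∫ ω, 1 / p ω * (I ω * Y ω) ∂P
          = ∫ ω, (P[(fun ω => 1 / p ω * (I ω * Y ω))|mH]) ω ∂P :=
            (integral_condExp hm).symm
        _ = ∫ ω, 1 / p ω * r ω ∂P := integral_congr_ae h1
    have hB_eq : ∫ ω, η ω / p ω * I ω ∂P = ∫ ω, η ω / p ω * q ω ∂P := by
      have h1 := condExp_mul_of_stronglyMeasurable_left (μ := P)
        ((hη.div hp).stronglyMeasurable : StronglyMeasurable[mH] (fun ω => η ω / p ω))
        hB_int hI
      calc ∫ ω, η ω / p ω * I ω ∂P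
          = ∫ ω, (P[(fun ω => η ω / p ω * I ω)|mH]) ω ∂P :=
            (integral_condExp hm).symm
        _ = ∫ ω, η ω / p ω * q ω ∂P := integral_congr_ae h1
    have hr' : Integrable (fun ω => 1 / p ω * r ω) P :=
      hr_int.bdd_mul ((measurable_const.div hpm).aestronglyMeasurable) (c := 1/c) (ae_of_all P hinvb)
    have hqη : Integrable (fun ω => η ω / p ω * q ω) P := by
      refine (hη_int.abs.const_mul (1/c)).mono'
        (((hηm.div hpm).mul (hq_sm.measurable.mono hm le_rfl)).aestronglyMeasurable) ?_
      filter_upwards [hq0, hq1] with ω h0 h1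
      have h0' : (0:ℝ) ≤ q ω := by simpa using h0
      exact hbd _ _ _ (hpb ω).1 (abs_le.2 ⟨by linarith, h1⟩)
    have hAB : Integrable (fun ω => 1 / p ω * (I ω * Y ω) - η ω / p ω * I ω) P :=
      hA_int.sub hB_int
    have hAB2 : Integrable (fun ω => 1 / p ω * r ω - η ω / p ω * q ω) P := hr'.sub hqη
    refine ⟨hAB2.add hη_int, ?_⟩
    calc ∫ ω, (I ω / p ω * Y ω - (I ω - p ω) / p ω * η ω) ∂P
        = ∫ ω, (1 / p ω * (I ω * Y ω) - η ω / p ω * I ω + η ω) ∂P := by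
          refine integral_congr_ae (ae_of_all P fun ω => ?_)
          field_simp [hp0 ω]
          ring
      _ = ∫ ω, 1 / p ω * (I ω * Y ω) ∂P - ∫ ω, η ω / p ω * I ω ∂P + ∫ ω, η ω ∂P := by
          rw [integral_add hAB hη_int, integral_sub hA_int hB_int]
      _ = ∫ ω, 1 / p ω * r ω ∂P - ∫ ω, η ω / p ω * q ω ∂P + ∫ ω, η ω ∂P := by
          rw [hA_eq, hB_eq]
      _ = ∫ ω, (1 / p ω * r ω - η ω / p ω * q ω + η ω) ∂P := by
          rw [integral_add hAB2 hη_int, integral_sub hr' hqη]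
  have hηs_int : Integrable ηs P := hηs2.integrable (by norm_num)
  obtain ⟨hFhat_int, hkey_hat⟩ := key phat ηhat hphat hphatb hηhat hηhat2
  obtain ⟨hF'_int, hkey'⟩ := key p' η' hp' hp'b hη' hη'2
  have hF'_eq : ∫ ω, (1 / p' ω * r ω - η' ω / p' ω * q ω + η' ω) ∂P = ∫ ω, ηs ω ∂P := by
    refine integral_congr_ae ?_
    rcases hcase with h | h
    · have hpq : p' =ᵐ[P] q := h.trans hps
      filter_upwards [hrq, hpq] with ω h1 h2
      have hp'0 : p' ω ≠ 0 := ne_of_gt (lt_of_lt_of_le hc (hp'b ω).1)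
      rw [h1, ← h2]
      field_simp
      ring
    · filter_upwards [hrq, h] with ω h1 h2
      rw [h1, h2]; ring
  have hG_eq : ∫ ω, (1 / phat ω * r ω - ηhat ω / phat ω * q ω + ηhat ω) ∂P
        - ∫ ω, ηs ω ∂P
      = ∫ ω, (q ω - phat ω) * (ηs ω - ηhat ω) / phat ω ∂P := by
    rw [← integral_sub hFhat_int hηs_int]
    refine integral_congr_ae ?_
    filter_upwards [hrq] with ω h1
    have h0 : phat ω ≠ 0 := ne_of_gt (lt_of_lt_of_le hc (hphatb ω).1)
    rw [h1]
    field_simp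
    ring
  have hG_int : Integrable (fun ω => (q ω - phat ω) * (ηs ω - ηhat ω) / phat ω) P := by
    refine (hFhat_int.sub hηs_int).congr ?_
    filter_upwards [hrq] with ω h1
    have h0 : phat ω ≠ 0 := ne_of_gt (lt_of_lt_of_le hc (hphatb ω).1)
    simp only [Pi.sub_apply]
    rw [h1]
    field_simp
    ring
  have hpq2 : MemLp (fun ω => phat ω - q ω) 2 P := by
    refine MemLp.of_le (memLp_const (2:ℝ))
      (((hphat.mono hm le_rfl).sub (hq_sm.measurable.mono hm le_rfl)).aestronglyMeasurable)
      ?_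
    filter_upwards [hq0, hq1] with ω h0 h1
    have h0' : (0:ℝ) ≤ q ω := by simpa using h0
    have h2 := (hphatb ω)
    have h3 : |phat ω - q ω| ≤ 2 := by
      rw [abs_le]; constructor <;> nlinarith
    calc ‖phat ω - q ω‖ = |phat ω - q ω| := Real.norm_eq_abs _
      _ ≤ 2 := h3
      _ = ‖(2:ℝ)‖ := by norm_num
  have hηq2 : MemLp (fun ω => ηhat ω - ηs ω) 2 P := by
    have := hηhat2.sub hηs2
    exact this
  have hf0 : MemLp (fun ω => |phat ω - q ω|) 2 P := by
    simpa [Real.norm_eq_abs] using hpq2.norm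
  have hg0 : MemLp (fun ω => |ηhat ω - ηs ω|) 2 P := by
    simpa [Real.norm_eq_abs] using hηq2.norm
  have hfg_int : Integrable (fun ω => |phat ω - q ω| * |ηhat ω - ηs ω|) P := by
    refine ((hf0.integrable_sq.add hg0.integrable_sq).div_const 2).mono'
      (hf0.aestronglyMeasurable.mul hg0.aestronglyMeasurable) (ae_of_all P fun ω => ?_)
    rw [Real.norm_eq_abs, abs_mul, abs_abs, abs_abs]
    simp only [Pi.add_apply]
    nlinarith [abs_nonneg (phat ω - q ω), abs_nonneg (ηhat ω - ηs ω),
      sq_nonneg (|phat ω - q ω| - |ηhat ω - ηs ω|)]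
  have hconj : Real.HolderConjugate 2 2 := by constructor <;> norm_num
  have hCS := integral_mul_le_Lp_mul_Lq_of_nonneg (μ := P) hconj
      (ae_of_all P fun ω => abs_nonneg _) (ae_of_all P fun ω => abs_nonneg _)
      ((by norm_num : ENNReal.ofReal 2 = 2) ▸ hf0)
      ((by norm_num : ENNReal.ofReal 2 = 2) ▸ hg0)
  have hXeq : (eLpNorm (phat - ps) 2 P).toReal
      = (∫ ω, |phat ω - q ω| ^ (2:ℝ) ∂P) ^ (1/2 : ℝ) := by
    have h1 : eLpNorm (phat - ps) 2 P = eLpNorm (fun ω => phat ω - q ω) 2 P := by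
      refine eLpNorm_congr_ae ?_
      filter_upwards [hps] with ω h2
      simp [h2]
    rw [h1, MemLp.eLpNorm_eq_integral_rpow_norm two_ne_zero ENNReal.ofNat_ne_top hpq2,
      ENNReal.toReal_ofReal (by positivity)]
    norm_num [Real.norm_eq_abs]
  have hZeq : (eLpNorm (ηhat - ηs) 2 P).toReal
      = (∫ ω, |ηhat ω - ηs ω| ^ (2:ℝ) ∂P) ^ (1/2 : ℝ) := by
    have h1 : eLpNorm (ηhat - ηs) 2 P = eLpNorm (fun ω => ηhat ω - ηs ω) 2 P := rfl
    rw [h1, MemLp.eLpNorm_eq_integral_rpow_norm two_ne_zero ENNReal.ofNat_ne_top hηq2,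
      ENNReal.toReal_ofReal (by positivity)]
    norm_num [Real.norm_eq_abs]
  have hfinal : |∫ ω, (q ω - phat ω) * (ηs ω - ηhat ω) / phat ω ∂P|
      ≤ 1/c * (eLpNorm (phat - ps) 2 P).toReal * (eLpNorm (ηhat - ηs) 2 P).toReal := by
    calc |∫ ω, (q ω - phat ω) * (ηs ω - ηhat ω) / phat ω ∂P|
        ≤ ∫ ω, |(q ω - phat ω) * (ηs ω - ηhat ω) / phat ω| ∂P :=
          by
            simpa only [Real.norm_eq_abs] using
              norm_integral_le_integral_norm (μ := P)
                (f := fun ω => (q ω - phat ω) * (ηs ω - ηhat ω) / phat ω)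
      _ ≤ ∫ ω, 1/c * (|phat ω - q ω| * |ηhat ω - ηs ω|) ∂P := by
          refine integral_mono hG_int.abs (hfg_int.const_mul (1/c)) fun ω => ?_
          have hpω : 0 < phat ω := lt_of_lt_of_le hc (hphatb ω).1
          rw [abs_div, abs_of_pos hpω, abs_mul, abs_sub_comm (q ω), abs_sub_comm (ηs ω)]
          calc |phat ω - q ω| * |ηhat ω - ηs ω| / phat ω
              ≤ |phat ω - q ω| * |ηhat ω - ηs ω| / c :=
                div_le_div_of_nonneg_left (by positivity) hc (hphatb ω).1
            _ = 1/c * (|phat ω - q ω| * |ηhat ω - ηs ω|) := by ring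
      _ = 1/c * ∫ ω, |phat ω - q ω| * |ηhat ω - ηs ω| ∂P := integral_const_mul _ _
      _ ≤ 1/c * ((∫ ω, |phat ω - q ω| ^ (2:ℝ) ∂P) ^ (1/2:ℝ)
            * (∫ ω, |ηhat ω - ηs ω| ^ (2:ℝ) ∂P) ^ (1/2:ℝ)) := by
          refine mul_le_mul_of_nonneg_left ?_ (by positivity)
          simpa using hCS
      _ = 1/c * (eLpNorm (phat - ps) 2 P).toReal * (eLpNorm (ηhat - ηs) 2 P).toReal := by
          rw [hXeq, hZeq]; ring
  have e1 : ∫ ω, ((if A ω = d ω then (1:ℝ) else 0) / phat ω * Y ω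
        - ((if A ω = d ω then (1:ℝ) else 0) - phat ω) / phat ω * ηhat ω) ∂P
      = ∫ ω, (1 / phat ω * r ω - ηhat ω / phat ω * q ω + ηhat ω) ∂P := hkey_hat
  have e2 : ∫ ω, ((if A ω = d ω then (1:ℝ) else 0) / p' ω * Y ω
        - ((if A ω = d ω then (1:ℝ) else 0) - p' ω) / p' ω * η' ω) ∂P
      = ∫ ω, (1 / p' ω * r ω - η' ω / p' ω * q ω + η' ω) ∂P := hkey'
  calc |(∫ ω, ((if A ω = d ω then (1:ℝ) else 0) / phat ω * Y ω
            - ((if A ω = d ω then (1:ℝ) else 0) - phat ω) / phat ω * ηhat ω) ∂P)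
        - ∫ ω, ((if A ω = d ω then (1:ℝ) else 0) / p' ω * Y ω
            - ((if A ω = d ω then (1:ℝ) else 0) - p' ω) / p' ω * η' ω) ∂P|
      = |∫ ω, (q ω - phat ω) * (ηs ω - ηhat ω) / phat ω ∂P| := by
        rw [e1, e2, hF'_eq, hG_eq]
    _ ≤ 1/c * (eLpNorm (phat - ps) 2 P).toReal * (eLpNorm (ηhat - ηs) 2 P).toReal := hfinal
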